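/- Under the MIMO continuous-time adaptive law setup, the Lyapunov function V(t) = tr[(Θ(t) − Θ*) Γ_p (Θ(t) − Θ*)ᵀ] + tr[(Ψ(t) − K_p)ᵀ Γ⁻¹ (Ψ(t) − K_p)], with Γ_p = K_pᵀ S_p⁻¹, is differentiable and satisfies dV/dt (t) = −2 ε(t)ᵀ ε(t)/m(t)² ≤ 0 for every t. -/

import Mathlib

open Matrix BigOperators

lemma vecMulVec_transpose' {a b : Type*} (u : a → ℝ) (v : b → ℝ) :
    (Matrix.vecMulVec u v)ᵀ = Matrix.vecMulVec v u := by
  ext i j; simp [Matrix.vecMulVec_apply, mul_comm]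

lemma trace_mul_vecMulVec' {a b : Type*} [Fintype a] [Fintype b]
    (X : Matrix a b ℝ) (u : b → ℝ) (v : a → ℝ) :
    Matrix.trace (X * Matrix.vecMulVec u v) = (X *ᵥ u) ⬝ᵥ v := by
  rw [Matrix.vecMulVec_eq Unit, ← Matrix.mul_assoc, Matrix.trace_mul_comm,
    ← Matrix.replicateCol_mulVec, Matrix.trace_mul_comm, Matrix.trace_replicateCol_mul_replicateRow]

lemma dot_mulVec_left' {a b : Type*} [Fintype a] [Fintype b]
    (A : Matrix a b ℝ) (u : b → ℝ) (v : a → ℝ) :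
    (A *ᵥ u) ⬝ᵥ v = u ⬝ᵥ (Aᵀ *ᵥ v) := by
  rw [dotProduct_comm, Matrix.dotProduct_mulVec, ← Matrix.mulVec_transpose, dotProduct_comm]

lemma hasDerivAt_trace_mul' {a b : Type*} [Fintype a] [Fintype b]
    (t : ℝ) (A : ℝ → Matrix a b ℝ) (A' : Matrix a b ℝ)
    (B : ℝ → Matrix b a ℝ) (B' : Matrix b a ℝ) (C : Matrix b b ℝ)
    (hA : ∀ i j, HasDerivAt (fun s => A s i j) (A' i j) t)
    (hB : ∀ i j, HasDerivAt (fun s => B s i j) (B' i j) t) :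
    HasDerivAt (fun s => Matrix.trace (A s * C * B s))
      (Matrix.trace (A' * C * B t) + Matrix.trace (A t * C * B')) t := by
  have hfun : ∀ (P : Matrix a b ℝ) (Q : Matrix b a ℝ),
      Matrix.trace (P * C * Q) = ∑ i, ∑ j, ∑ k, P i k * C k j * Q j i := by
    intro P Q
    simp only [Matrix.trace, Matrix.diag, Matrix.mul_apply, Finset.sum_mul]
  have h : HasDerivAt (fun s => ∑ i, ∑ j, ∑ k, A s i k * C k j * B s j i)
      (∑ i, ∑ j, ∑ k, (A' i k * C k j * B t j i + A t i k * C k j * B' j i)) t := by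
    refine HasDerivAt.fun_sum fun i _ => HasDerivAt.fun_sum fun j _ => HasDerivAt.fun_sum fun k _ => ?_
    exact ((hA i k).mul_const (C k j)).mul (hB j i)
  simp only [hfun]
  convert h using 1
  simp [Finset.sum_add_distrib]

/-- MIMO continuous-time adaptive laws: the Lyapunov function
`V = tr[(Θ − Θ*) Γ_p (Θ − Θ*)ᵀ] + tr[(Ψ − K_p)ᵀ Γ⁻¹ (Ψ − K_p)]` with
`Γ_p = K_pᵀ S_p⁻¹` is differentiable with `dV/dt = −2 εᵀε/m² ≤ 0`. -/
theorem mimo_continuous_lyapunov_derivative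
    (N M : ℕ) (hN : 0 < N) (hM : 0 < M)
    (ζ : ℝ → Fin N → ℝ) (ξ : ℝ → Fin M → ℝ)
    (hζc : ∀ i, Continuous fun t => ζ t i)
    (hξc : ∀ j, Continuous fun t => ξ t j)
    (m : ℝ → ℝ)
    (hm : ∀ t, m t = Real.sqrt (1 + (∑ i, ζ t i * ζ t i) + ∑ j, ξ t j * ξ t j))
    (Kp Sp : Matrix (Fin M) (Fin M) ℝ) (hSp : IsUnit Sp.det)
    (hKS : (Kp * Sp).PosDef)
    (Γ : Matrix (Fin M) (Fin M) ℝ) (hΓ : Γ.PosDef)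
    (Θs : Matrix (Fin N) (Fin M) ℝ)
    (Θ Θ' : ℝ → Matrix (Fin N) (Fin M) ℝ) (Ψ Ψ' : ℝ → Matrix (Fin M) (Fin M) ℝ)
    (hΘd : ∀ t i j, HasDerivAt (fun s => Θ s i j) (Θ' t i j) t)
    (hΨd : ∀ t i j, HasDerivAt (fun s => Ψ s i j) (Ψ' t i j) t)
    (ε : ℝ → Fin M → ℝ)
    (hε : ∀ t, ε t = Kp.mulVec ((Θ t - Θs)ᵀ.mulVec (ζ t)) + (Ψ t - Kp).mulVec (ξ t))
    (hΘlaw : ∀ t, (Θ' t)ᵀ = -(m t ^ 2)⁻¹ • Matrix.vecMulVec (Sp.mulVec (ε t)) (ζ t))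
    (hΨlaw : ∀ t, Ψ' t = -(m t ^ 2)⁻¹ • Matrix.vecMulVec (Γ.mulVec (ε t)) (ξ t))
    (V : ℝ → ℝ)
    (hV : ∀ t, V t = Matrix.trace ((Θ t - Θs) * (Kpᵀ * Sp⁻¹) * (Θ t - Θs)ᵀ)
        + Matrix.trace ((Ψ t - Kp)ᵀ * Γ⁻¹ * (Ψ t - Kp))) :
    ∀ t, HasDerivAt V (-2 * (∑ j, ε t j * ε t j) / m t ^ 2) t ∧
      -2 * (∑ j, ε t j * ε t j) / m t ^ 2 ≤ 0 := by
  intro t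
  have hz2 : (0:ℝ) ≤ ∑ i, ζ t i * ζ t i := Finset.sum_nonneg fun i _ => mul_self_nonneg _
  have hx2 : (0:ℝ) ≤ ∑ j, ξ t j * ξ t j := Finset.sum_nonneg fun j _ => mul_self_nonneg _
  have hmpos : 0 < m t := by
    rw [hm t]; exact Real.sqrt_pos.2 (by linarith)
  have hm2 : 0 < m t ^ 2 := by positivity
  have hS : (0:ℝ) ≤ ∑ j, ε t j * ε t j := Finset.sum_nonneg fun j _ => mul_self_nonneg _
  refine ⟨?_, div_nonpos_of_nonpos_of_nonneg (by linarith) (le_of_lt hm2)⟩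
  -- notation
  set c : ℝ := (m t ^ 2)⁻¹ with hc
  set e : Fin M → ℝ := ε t with he
  set z : Fin N → ℝ := ζ t with hzdef
  set x : Fin M → ℝ := ξ t with hxdef
  -- symmetry facts
  have hΓdet : IsUnit Γ.det := hΓ.det_pos.ne'.isUnit
  have hΓsymm : Γᵀ = Γ := by
    have h := hΓ.1.eq
    rwa [Matrix.conjTranspose_eq_transpose_of_trivial] at h
  have hsym : Spᵀ * Kpᵀ = Kp * Sp := by
    have h := hKS.1.eq
    rwa [Matrix.conjTranspose_eq_transpose_of_trivial, Matrix.transpose_mul] at h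
  have hGp1 : Spᵀ * ((Kpᵀ * Sp⁻¹) * (Θ t - Θs)ᵀ) = Kp * (Θ t - Θs)ᵀ := by
    rw [← Matrix.mul_assoc, ← Matrix.mul_assoc, hsym, Matrix.mul_assoc Kp,
      Matrix.mul_nonsing_inv _ hSp, Matrix.mul_one]
  have hGp2 : (Θ t - Θs) * (Kpᵀ * Sp⁻¹) * Sp = (Θ t - Θs) * Kpᵀ := by
    rw [Matrix.mul_assoc, Matrix.mul_assoc, Matrix.nonsing_inv_mul _ hSp, Matrix.mul_one]
  have hΓ2 : Γ * (Γ⁻¹ * (Ψ t - Kp)) = Ψ t - Kp := by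
    rw [← Matrix.mul_assoc, Matrix.mul_nonsing_inv _ hΓdet, Matrix.one_mul]
  have hΓ3 : (Ψ t - Kp)ᵀ * Γ⁻¹ * Γ = (Ψ t - Kp)ᵀ := by
    rw [Matrix.mul_assoc, Matrix.nonsing_inv_mul _ hΓdet, Matrix.mul_one]
  -- the adaptive laws
  have hΘ'T := hΘlaw t
  have hΘ' : Θ' t = -c • Matrix.vecMulVec z (Sp *ᵥ e) := by
    calc Θ' t = ((Θ' t)ᵀ)ᵀ := (Matrix.transpose_transpose _).symm
    _ = _ := by rw [hΘ'T, Matrix.transpose_smul, vecMulVec_transpose']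
  have hΨ' := hΨlaw t
  have hΨ'T : (Ψ' t)ᵀ = -c • Matrix.vecMulVec x (Γ *ᵥ e) := by
    rw [hΨ', Matrix.transpose_smul, vecMulVec_transpose']
  -- derivative of V
  have hD : ∀ i j, HasDerivAt (fun s => (Θ s - Θs) i j) (Θ' t i j) t := fun i j => by
    simpa using (hΘd t i j).sub_const (Θs i j)
  have hDT : ∀ i j, HasDerivAt (fun s => (Θ s - Θs)ᵀ i j) ((Θ' t)ᵀ i j) t := fun i j => by
    simpa using (hΘd t j i).sub_const (Θs j i)
  have hE : ∀ i j, HasDerivAt (fun s => (Ψ s - Kp) i j) (Ψ' t i j) t := fun i j => by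
    simpa using (hΨd t i j).sub_const (Kp i j)
  have hET : ∀ i j, HasDerivAt (fun s => (Ψ s - Kp)ᵀ i j) ((Ψ' t)ᵀ i j) t := fun i j => by
    simpa using (hΨd t j i).sub_const (Kp j i)
  have h1 := hasDerivAt_trace_mul' t (fun s => Θ s - Θs) (Θ' t)
    (fun s => (Θ s - Θs)ᵀ) ((Θ' t)ᵀ) (Kpᵀ * Sp⁻¹) hD hDT
  have h2 := hasDerivAt_trace_mul' t (fun s => (Ψ s - Kp)ᵀ) ((Ψ' t)ᵀ)
    (fun s => Ψ s - Kp) (Ψ' t) Γ⁻¹ hET hE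
  have hVf : V = fun s => Matrix.trace ((Θ s - Θs) * (Kpᵀ * Sp⁻¹) * (Θ s - Θs)ᵀ)
      + Matrix.trace ((Ψ s - Kp)ᵀ * Γ⁻¹ * (Ψ s - Kp)) := funext hV
  rw [hVf]
  convert h1.fun_add h2 using 1
  case e'_4 => rfl
  case e'_5 => rfl
  -- now compute the derivative value
  have hT1 : Matrix.trace (Θ' t * (Kpᵀ * Sp⁻¹) * (Θ t - Θs)ᵀ)
      = -c * (e ⬝ᵥ (Kp *ᵥ ((Θ t - Θs)ᵀ *ᵥ z))) := by
    rw [hΘ', Matrix.smul_mul, Matrix.smul_mul, Matrix.trace_smul, smul_eq_mul]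
    congr 1
    rw [Matrix.mul_assoc, Matrix.trace_mul_comm, trace_mul_vecMulVec',
      dotProduct_comm, dot_mulVec_left', Matrix.mulVec_mulVec, hGp1,
      ← Matrix.mulVec_mulVec]
  have hT2 : Matrix.trace ((Θ t - Θs) * (Kpᵀ * Sp⁻¹) * (Θ' t)ᵀ)
      = -c * (e ⬝ᵥ (Kp *ᵥ ((Θ t - Θs)ᵀ *ᵥ z))) := by
    rw [hΘ'T, Matrix.mul_smul, Matrix.trace_smul, smul_eq_mul]
    congr 1
    rw [trace_mul_vecMulVec', Matrix.mulVec_mulVec, hGp2, dot_mulVec_left',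
      Matrix.transpose_mul, Matrix.transpose_transpose, ← Matrix.mulVec_mulVec]
  have hT3 : Matrix.trace ((Ψ' t)ᵀ * Γ⁻¹ * (Ψ t - Kp))
      = -c * (e ⬝ᵥ ((Ψ t - Kp) *ᵥ x)) := by
    rw [hΨ'T, Matrix.smul_mul, Matrix.smul_mul, Matrix.trace_smul, smul_eq_mul]
    congr 1
    rw [Matrix.mul_assoc, Matrix.trace_mul_comm, trace_mul_vecMulVec',
      dotProduct_comm, dot_mulVec_left', hΓsymm, Matrix.mulVec_mulVec, hΓ2]
  have hT4 : Matrix.trace ((Ψ t - Kp)ᵀ * Γ⁻¹ * Ψ' t)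
      = -c * (e ⬝ᵥ ((Ψ t - Kp) *ᵥ x)) := by
    rw [hΨ', Matrix.mul_smul, Matrix.trace_smul, smul_eq_mul]
    congr 1
    rw [trace_mul_vecMulVec', Matrix.mulVec_mulVec, hΓ3, dot_mulVec_left',
      Matrix.transpose_transpose]
  rw [hT1, hT2, hT3, hT4]
  have hsum : e ⬝ᵥ (Kp *ᵥ ((Θ t - Θs)ᵀ *ᵥ z)) + e ⬝ᵥ ((Ψ t - Kp) *ᵥ x)
      = ∑ j, ε t j * ε t j := by
    rw [← dotProduct_add, ← hε t]
    rfl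
  rw [div_eq_mul_inv]
  linear_combination (2 * c) * hsum
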